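/- Fix a period L > 0 and admissible nonlinearities f₁, f₂ with zeros a₁, a₂. Set f̲₂(u) := min_{x∈[0,L]} f₂(u,x), f̄₂(u) := max_{x∈[0,L]} f₂(u,x) (admissible, independent of the second variable), θ̲ := Θ(0, f̲₂), θ̄ := Θ(0, f̄₂), and for x ∈ ℝ set Θ₁(x) := Θ(x, (u,y) ↦ f₁(u, 2x − y)). Then 0 < inf_{x∈[0,L]} Θ₁(x) ≤ sup_{x∈[0,L]} Θ₁(x) < +∞, and, defining r̲ := ( θ̲ / sup_{x∈[0,L]} Θ₁(x) )² and r̄ := ( θ̄ / inf_{x∈[0,L]} Θ₁(x) )², the following holds for all d, α > 0: (i) if there exists x ∈ [0,L) with α Θ₁(x) ≥ Θ(x, (u,y) ↦ (1/d) f₂(u/d, y)), then α²/d ≥ r̲; (ii) if there exists x ∈ [0,L) with α Θ₁(x) ≤ Θ(x, (u,y) ↦ (1/d) f₂(u/d, y)), then α²/d ≤ r̄. In particular, if both conditions hold (i.e. the sets X⁺_{(d,α)} and X⁻_{(d,α)} of the paper are both nonempty), then r̲ ≤ α²/d ≤ r̄. -/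

import Mathlib

open MeasureTheory Set Filter Topology Function

noncomputable section

/-- An admissible nonlinearity with period `L` and zero `a`:
`f` is `C¹`, `L`-periodic in its second variable, positive at `u = 0` uniformly in `x`,
decreasing in its first variable, and vanishes at `u = a` for all `x`. -/
structure Admissible (L : ℝ) (f : ℝ → ℝ → ℝ) (a : ℝ) : Prop where
  smooth : ContDiff ℝ 1 (uncurry f)
  periodic : ∀ u x, f u (x + L) = f u x
  pos_at_zero : ∃ m > 0, ∀ x, m ≤ f 0 x
  strict_anti : ∀ x, StrictAnti (fun u => f u x)
  zero_pos : 0 < a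
  zero_root : ∀ x, f a x = 0

/-- `Zfun s φ t x = φ (x - s t, x)`. -/
def Zfun (s : ℝ) (φ : ℝ → ℝ → ℝ) : ℝ → ℝ → ℝ := fun t x => φ (x - s * t) x

/-- A regular segregated pulsating front with speed `s` and profile `φ`. -/
structure SegFront (L d α a₁ a₂ : ℝ) (f₁ f₂ : ℝ → ℝ → ℝ) (s : ℝ)
    (φ : ℝ → ℝ → ℝ) : Prop where
  cont : Continuous (uncurry φ)
  bdd : ∃ M, ∀ ξ x, |φ ξ x| ≤ M
  per : ∀ ξ x, φ ξ (x + L) = φ ξ x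
  mono : ∀ x, Antitone (fun ξ => φ ξ x)
  pos : ∃ ξ x, 0 < φ ξ x
  neg : ∃ ξ x, φ ξ x < 0
  lim_left : ∀ ε > 0, ∃ M, ∀ ξ, M ≤ ξ → ∀ x ∈ Icc (0:ℝ) L, |φ (-ξ) x - α * a₁| < ε
  lim_right : ∀ ε > 0, ∃ M, ∀ ξ, M ≤ ξ → ∀ x ∈ Icc (0:ℝ) L, |φ ξ x + d * a₂| < ε
  pde : ∃ zt zx zxx : ℝ → ℝ → ℝ,
    (∀ t x, Zfun s φ t x ≠ 0 → HasDerivAt (fun τ => Zfun s φ τ x) (zt t x) t) ∧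
    (∀ t x, Zfun s φ t x ≠ 0 → HasDerivAt (fun y => Zfun s φ t y) (zx t x) x) ∧
    (∀ t x, Zfun s φ t x ≠ 0 → HasDerivAt (fun y => zx t y) (zxx t x) x) ∧
    ContinuousOn (uncurry zt) {p : ℝ × ℝ | Zfun s φ p.1 p.2 ≠ 0} ∧
    ContinuousOn (uncurry zx) {p : ℝ × ℝ | Zfun s φ p.1 p.2 ≠ 0} ∧
    ContinuousOn (uncurry zxx) {p : ℝ × ℝ | Zfun s φ p.1 p.2 ≠ 0} ∧
    (∀ t x, 0 < Zfun s φ t x →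
      zt t x = zxx t x + Zfun s φ t x * f₁ (Zfun s φ t x / α) x) ∧
    (∀ t x, Zfun s φ t x < 0 →
      zt t x = d * zxx t x + Zfun s φ t x * f₂ (-(Zfun s φ t x) / d) x)

/-- The limiting nonlinearity `η(z, x)`. -/
def eta (d α : ℝ) (f₁ f₂ : ℝ → ℝ → ℝ) (z x : ℝ) : ℝ :=
  f₁ (z / α) x * max z 0 - (1 / d) * f₂ (-z / d) x * (-(min z 0))

/-- A segregated stationary equilibrium. -/
structure SegEquilibrium (L d α : ℝ) (f₁ f₂ : ℝ → ℝ → ℝ) (e : ℝ → ℝ) : Prop where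
  smooth : ContDiff ℝ 2 e
  bdd : ∃ M, ∀ x, |e x| ≤ M
  ode : ∀ x, -(deriv (deriv e) x) = eta d α f₁ f₂ (e x) x
  mono : ∀ x, Antitone (fun n : ℕ => e (x + n * L))
  pos : ∃ x, 0 < e x
  neg : ∃ x, e x < 0
  tail : BddBelow {x | e x < 0} ∨ BddAbove {x | 0 < e x}

/-- The Du–Lin solution on `[x₀, ∞)`: bounded, nonnegative, nonzero, `C²`, vanishing
at `x₀`, solving `-z'' = z f(z, ·)` on `(x₀, ∞)`. -/
structure IsDuLin (x₀ : ℝ) (f : ℝ → ℝ → ℝ) (z : ℝ → ℝ) : Prop where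
  diff1 : ∀ x ∈ Ici x₀, DifferentiableWithinAt ℝ z (Ici x₀) x
  diff2 : ∀ x ∈ Ici x₀,
    DifferentiableWithinAt ℝ (derivWithin z (Ici x₀)) (Ici x₀) x
  cont2 : ContinuousOn (derivWithin (derivWithin z (Ici x₀)) (Ici x₀)) (Ici x₀)
  bdd : ∃ M, ∀ x ∈ Ici x₀, |z x| ≤ M
  nonneg : ∀ x ∈ Ici x₀, 0 ≤ z x
  nonzero : ∃ x ∈ Ici x₀, z x ≠ 0
  zero_at : z x₀ = 0
  ode : ∀ x ∈ Ioi x₀,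
    -(derivWithin (derivWithin z (Ici x₀)) (Ici x₀) x) = z x * f (z x) x

/-- `∂ₜ` of a function of `(t, x)`. -/
def dT (u : ℝ → ℝ → ℝ) (t x : ℝ) : ℝ := deriv (fun τ => u τ x) t

/-- `∂ₓ` of a function of `(t, x)` (or of `(ξ, x)`). -/
def dX (u : ℝ → ℝ → ℝ) (t x : ℝ) : ℝ := deriv (fun y => u t y) x

/-- `∂ₓₓ` of a function of `(t, x)`. -/
def dXX (u : ℝ → ℝ → ℝ) (t x : ℝ) : ℝ := deriv (fun y => dX u t y) x

/-- `∂_ξ` of a profile. -/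
def dXi (φ : ℝ → ℝ → ℝ) (ξ x : ℝ) : ℝ := deriv (fun ζ => φ ζ x) ξ

/-- A pulsating front of the competition system `(P_k)`. -/
structure PkFront (L d α k a₁ a₂ : ℝ) (f₁ f₂ : ℝ → ℝ → ℝ) (c : ℝ)
    (φ₁ φ₂ : ℝ → ℝ → ℝ) : Prop where
  smooth1 : ContDiff ℝ 2 (uncurry φ₁)
  smooth2 : ContDiff ℝ 2 (uncurry φ₂)
  per1 : ∀ ξ x, φ₁ ξ (x + L) = φ₁ ξ x
  per2 : ∀ ξ x, φ₂ ξ (x + L) = φ₂ ξ x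
  mono1 : ∀ x, Antitone (fun ξ => φ₁ ξ x)
  mono2 : ∀ x, Monotone (fun ξ => φ₂ ξ x)
  pde1 : ∀ t x, dT (Zfun c φ₁) t x =
      dXX (Zfun c φ₁) t x + Zfun c φ₁ t x * f₁ (Zfun c φ₁ t x) x
        - k * Zfun c φ₁ t x * Zfun c φ₂ t x
  pde2 : ∀ t x, dT (Zfun c φ₂) t x =
      d * dXX (Zfun c φ₂) t x + Zfun c φ₂ t x * f₂ (Zfun c φ₂ t x) x
        - α * k * Zfun c φ₁ t x * Zfun c φ₂ t x
  lim_left : ∀ ε > 0, ∃ M, ∀ ξ, ξ ≤ M → ∀ x ∈ Icc (0:ℝ) L,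
      |φ₁ ξ x - a₁| < ε ∧ |φ₂ ξ x| < ε
  lim_right : ∀ ε > 0, ∃ M, ∀ ξ, M ≤ ξ → ∀ x ∈ Icc (0:ℝ) L,
      |φ₁ ξ x| < ε ∧ |φ₂ ξ x - a₂| < ε

/-- A positive pulsating front for the scalar equation `∂ₜ z = δ ∂ₓₓ z + z g(z, x)`
connecting `a` to `0` at speed `s`. -/
structure ScalarFront (L δ a : ℝ) (g : ℝ → ℝ → ℝ) (s : ℝ) (ψ : ℝ → ℝ → ℝ) : Prop where
  smooth : ContDiff ℝ 2 (uncurry ψ)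
  per : ∀ ξ x, ψ ξ (x + L) = ψ ξ x
  pos : ∀ ξ x, 0 < ψ ξ x
  pde : ∀ t x, dT (Zfun s ψ) t x =
      δ * dXX (Zfun s ψ) t x + Zfun s ψ t x * g (Zfun s ψ t x) x
  lim_left : ∀ ε > 0, ∃ M, ∀ ξ, ξ ≤ M → ∀ x ∈ Icc (0:ℝ) L, |ψ ξ x - a| < ε
  lim_right : ∀ ε > 0, ∃ M, ∀ ξ, M ≤ ξ → ∀ x ∈ Icc (0:ℝ) L, |ψ ξ x| < ε

/-- `σ(v) = 1` if `v > 0`, `1/d` if `v < 0` (the value at `0` is irrelevant). -/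
def sigmaFun (d v : ℝ) : ℝ := if 0 < v then 1 else if v < 0 then 1 / d else 0

/-- Extra regularity of a segregated pulsating front (established in the paper):
`z = Zfun s φ` is everywhere differentiable in `x` with `∂ₓ z` continuous on `ℝ²` and
negative on the zero set of `z`, and `∂ₜ z` exists off the zero set and has there the
strict sign of `s`. -/
def FrontRegular (s : ℝ) (φ zt zx : ℝ → ℝ → ℝ) : Prop :=
  (∀ t x, HasDerivAt (fun y => Zfun s φ t y) (zx t x) x) ∧
  Continuous (uncurry zx) ∧
  (∀ t x, Zfun s φ t x = 0 → zx t x < 0) ∧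
  (∀ t x, Zfun s φ t x ≠ 0 → HasDerivAt (fun τ => Zfun s φ τ x) (zt t x) t) ∧
  (0 < s → ∀ t x, Zfun s φ t x ≠ 0 → 0 < zt t x) ∧
  (s < 0 → ∀ t x, Zfun s φ t x ≠ 0 → zt t x < 0)


section DuLinAux

open intervalIntegral

lemma isDuLin_contOn {x₀ : ℝ} {g : ℝ → ℝ → ℝ} {z : ℝ → ℝ} (hz : IsDuLin x₀ g z) :
    ContinuousOn z (Ici x₀) := fun x hx => (hz.diff1 x hx).continuousWithinAt

lemma isDuLin_cont1 {x₀ : ℝ} {g : ℝ → ℝ → ℝ} {z : ℝ → ℝ} (hz : IsDuLin x₀ g z) :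
    ContinuousOn (derivWithin z (Ici x₀)) (Ici x₀) :=
  fun x hx => (hz.diff2 x hx).continuousWithinAt

lemma isDuLin_hasDeriv {x₀ : ℝ} {g : ℝ → ℝ → ℝ} {z : ℝ → ℝ} (hz : IsDuLin x₀ g z)
    {x : ℝ} (hx : x₀ < x) : HasDerivAt z (derivWithin z (Ici x₀) x) x :=
  ((hz.diff1 x hx.le).hasDerivWithinAt).hasDerivAt (Ici_mem_nhds hx)

lemma isDuLin_hasDeriv1 {x₀ : ℝ} {g : ℝ → ℝ → ℝ} {z : ℝ → ℝ} (hz : IsDuLin x₀ g z)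
    {x : ℝ} (hx : x₀ < x) :
    HasDerivAt (derivWithin z (Ici x₀)) (derivWithin (derivWithin z (Ici x₀)) (Ici x₀) x) x :=
  ((hz.diff2 x hx.le).hasDerivWithinAt).hasDerivAt (Ici_mem_nhds hx)

/-- Lower linear comparison: if the derivative of `z` is `≥ k` on the interior of a
convex set, then `z b + k (t - b) ≤ z t` for `b ≤ t` in the set. -/
lemma slope_lower {z z1 : ℝ → ℝ} {s : Set ℝ} (hs : Convex ℝ s)
    (hc : ContinuousOn z s) (hd : ∀ t ∈ interior s, HasDerivAt z (z1 t) t) {k : ℝ}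
    (hk : ∀ t ∈ interior s, k ≤ z1 t) {b t : ℝ} (hb : b ∈ s) (ht : t ∈ s) (hbt : b ≤ t) :
    z b + k * (t - b) ≤ z t := by
  have hmono : MonotoneOn (fun t => z t - k * t) s := by
    apply monotoneOn_of_deriv_nonneg (f := fun t => z t - k * t) hs
      (hc.sub (Continuous.continuousOn (by continuity)))
    · intro u hu
      exact ((hd u hu).sub (by simpa using (hasDerivAt_id u).const_mul k)).differentiableAt.differentiableWithinAt
    · intro u hu
      have h1 : HasDerivAt (fun t => z t - k * t) (z1 u - k) u :=
        (hd u hu).sub (by simpa using (hasDerivAt_id u).const_mul k)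
      rw [h1.deriv]
      linarith [hk u hu]
  have h2 := hmono hb ht hbt
  simp only at h2
  linarith

/-- Upper linear comparison. -/
lemma slope_upper {z z1 : ℝ → ℝ} {s : Set ℝ} (hs : Convex ℝ s)
    (hc : ContinuousOn z s) (hd : ∀ t ∈ interior s, HasDerivAt z (z1 t) t) {k : ℝ}
    (hk : ∀ t ∈ interior s, z1 t ≤ k) {b t : ℝ} (hb : b ∈ s) (ht : t ∈ s) (hbt : b ≤ t) :
    z t ≤ z b + k * (t - b) := by
  have h := slope_lower (z := fun x => -z x) (z1 := fun x => -z1 x) hs hc.neg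
    (fun u hu => (hd u hu).neg) (k := -k) (fun u hu => by simpa using hk u hu) hb ht hbt
  linarith

lemma dulin_key {x₀ a : ℝ} {g : ℝ → ℝ → ℝ} {z : ℝ → ℝ}
    (hz : IsDuLin x₀ g z) (ha : 0 < a)
    (hge : ∀ u y, 0 ≤ u → u ≤ a → 0 ≤ g u y)
    (hlt : ∀ u y, a < u → g u y < 0)
    (hβ : ∀ b, 0 ≤ b → b < a → ∃ β, 0 < β ∧ ∀ u y, 0 ≤ u → u ≤ b → β ≤ g u y) :
    0 ≤ derivWithin z (Ici x₀) x₀ ∧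
    (∀ h : ℝ → ℝ, Continuous h → (∀ u y, 0 ≤ u → u ≤ a → h u ≤ g u y) →
      2 * ∫ s in (0:ℝ)..a, s * h s ≤ derivWithin z (Ici x₀) x₀ ^ 2) ∧
    (∀ h : ℝ → ℝ, Continuous h → (∀ u y, 0 ≤ u → u ≤ a → g u y ≤ h u) →
      derivWithin z (Ici x₀) x₀ ^ 2 ≤ 2 * ∫ s in (0:ℝ)..a, s * h s) := by
  obtain ⟨M, hM⟩ := hz.bdd
  have hM0 : 0 ≤ M := le_trans (abs_nonneg _) (hM x₀ self_mem_Ici)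
  have hode : ∀ x, x₀ < x → derivWithin (derivWithin z (Ici x₀)) (Ici x₀) x
      = -(z x * g (z x) x) := by
    intro x hx
    have := hz.ode x hx
    linarith
  -- Step A : `z ≤ a`
  have hzle : ∀ x ∈ Ici x₀, z x ≤ a := by
    by_contra hcon
    push_neg at hcon
    obtain ⟨x₁, hx₁, hx₁a⟩ := hcon
    have hx01 : x₀ < x₁ := by
      rcases eq_or_lt_of_le (mem_Ici.1 hx₁) with h | h
      · exfalso; rw [← h, hz.zero_at] at hx₁a; linarith
      · exact h
    have hSclosed : IsClosed (Icc x₀ x₁ ∩ z ⁻¹' Iic a) :=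
      ((isDuLin_contOn hz).mono Icc_subset_Ici_self).preimage_isClosed_of_isClosed
        isClosed_Icc isClosed_Iic
    have hSne : (Icc x₀ x₁ ∩ z ⁻¹' Iic a).Nonempty :=
      ⟨x₀, ⟨le_refl _, hx01.le⟩, by simp only [mem_preimage, mem_Iic, hz.zero_at]; linarith⟩
    have hSbdd : BddAbove (Icc x₀ x₁ ∩ z ⁻¹' Iic a) := bddAbove_Icc.mono inter_subset_left
    set b := sSup (Icc x₀ x₁ ∩ z ⁻¹' Iic a) with hbdef
    have hbS := hSclosed.csSup_mem hSne hSbdd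
    obtain ⟨⟨hbx₀, hbx₁⟩, hbz'⟩ := hbS
    have hbz : z b ≤ a := hbz'
    have hblt : b < x₁ := lt_of_le_of_ne hbx₁ (fun h => by rw [h] at hbz; linarith)
    have habove : ∀ t, b < t → t ≤ x₁ → a < z t := by
      intro t hbt htx
      by_contra hle
      push_neg at hle
      exact absurd (le_csSup hSbdd ⟨⟨le_trans hbx₀ hbt.le, htx⟩, hle⟩) (not_le.2 hbt)
    obtain ⟨ξ, hξ, hξs⟩ := exists_hasDerivAt_eq_slope z (derivWithin z (Ici x₀)) hblt
      ((isDuLin_contOn hz).mono (Icc_subset_Ici_self.trans (Ici_subset_Ici.2 hbx₀)))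
      (fun t ht => isDuLin_hasDeriv hz (lt_of_le_of_lt hbx₀ ht.1))
    set k := derivWithin z (Ici x₀) ξ with hkdef
    have hkpos : 0 < k := by
      rw [hξs]
      exact div_pos (by linarith) (by linarith)
    have hξa : a < z ξ := habove ξ hξ.1 hξ.2.le
    have hx₀ξ : x₀ < ξ := lt_of_le_of_lt hbx₀ hξ.1
    have claim : ∀ t, ξ ≤ t → (∀ s, ξ ≤ s → s < t → a < z s) → z ξ + k * (t - ξ) ≤ z t := by
      intro t hξt habv
      rcases eq_or_lt_of_le hξt with rfl | hlt'
      · simp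
      have hsub : Icc ξ t ⊆ Ici x₀ := fun s hs => le_trans hx₀ξ.le hs.1
      have hmonoz1 : MonotoneOn (derivWithin z (Ici x₀)) (Icc ξ t) := by
        apply monotoneOn_of_deriv_nonneg (convex_Icc _ _) ((isDuLin_cont1 hz).mono hsub)
        · intro s hs
          rw [interior_Icc] at hs
          exact (isDuLin_hasDeriv1 hz (hx₀ξ.trans hs.1)).differentiableAt.differentiableWithinAt
        · intro s hs
          rw [interior_Icc] at hs
          rw [(isDuLin_hasDeriv1 hz (hx₀ξ.trans hs.1)).deriv, hode s (hx₀ξ.trans hs.1)]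
          have h1 : a < z s := habv s hs.1.le hs.2
          have h2 : g (z s) s < 0 := hlt _ _ h1
          nlinarith
      have h3 := slope_lower (convex_Icc ξ t) ((isDuLin_contOn hz).mono hsub)
        (fun s hs => by rw [interior_Icc] at hs; exact isDuLin_hasDeriv hz (hx₀ξ.trans hs.1))
        (k := k)
        (fun s hs => by
          rw [interior_Icc] at hs
          exact hmonoz1 (left_mem_Icc.2 hξt) (Ioo_subset_Icc_self hs) hs.1.le)
        (left_mem_Icc.2 hξt) (right_mem_Icc.2 hξt) hξt
      linarith
    by_cases hT : ∃ t, ξ ≤ t ∧ z t ≤ a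
    · have hTclosed : IsClosed (Ici ξ ∩ z ⁻¹' Iic a) :=
        ((isDuLin_contOn hz).mono (Ici_subset_Ici.2 hx₀ξ.le)).preimage_isClosed_of_isClosed
          isClosed_Ici isClosed_Iic
      have hTne : (Ici ξ ∩ z ⁻¹' Iic a).Nonempty := hT.imp fun t ht => ⟨ht.1, ht.2⟩
      have hTbdd : BddBelow (Ici ξ ∩ z ⁻¹' Iic a) := ⟨ξ, fun t ht => ht.1⟩
      have hcT := hTclosed.csInf_mem hTne hTbdd
      set c := sInf (Ici ξ ∩ z ⁻¹' Iic a) with hcdef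
      obtain ⟨hcξ, hcz'⟩ := hcT
      have hcz : z c ≤ a := hcz'
      have hbefore : ∀ s, ξ ≤ s → s < c → a < z s := by
        intro s hs hsc
        by_contra hh
        push_neg at hh
        exact absurd (csInf_le hTbdd ⟨hs, hh⟩) (not_le.2 hsc)
      have h4 := claim c hcξ hbefore
      have hξc : ξ ≤ c := hcξ
      nlinarith
    · push_neg at hT
      set t := ξ + (M + M + 1) / k with htdef
      have hkt : ξ ≤ t := by
        rw [htdef]
        have : 0 ≤ (M + M + 1) / k := div_nonneg (by linarith) hkpos.le
        linarith
      have h1 := claim t hkt (fun s hs _ => hT s hs)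
      have h2 : z t ≤ M := le_trans (le_abs_self _) (hM t (le_trans hx₀ξ.le hkt))
      have h3 : -M ≤ z ξ := neg_le_of_abs_le (hM ξ hx₀ξ.le)
      have h5 : k * (t - ξ) = M + M + 1 := by
        rw [htdef]
        field_simp
        ring
      nlinarith
  -- Step B : `z₁` is antitone on `Ici x₀`
  have hz1anti : AntitoneOn (derivWithin z (Ici x₀)) (Ici x₀) := by
    apply antitoneOn_of_deriv_nonpos (convex_Ici x₀) (isDuLin_cont1 hz)
    · intro s hs
      rw [interior_Ici] at hs
      exact (isDuLin_hasDeriv1 hz hs).differentiableAt.differentiableWithinAt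
    · intro s hs
      rw [interior_Ici] at hs
      rw [(isDuLin_hasDeriv1 hz hs).deriv, hode s hs]
      have h0 : 0 ≤ z s := hz.nonneg s (mem_Ici.2 hs.le)
      have h1 : z s ≤ a := hzle s (mem_Ici.2 hs.le)
      have h2 : 0 ≤ g (z s) s := hge _ _ h0 h1
      nlinarith
  -- Step C : `z₁ ≥ 0`
  have hz1nonneg : ∀ x ∈ Ici x₀, 0 ≤ derivWithin z (Ici x₀) x := by
    intro y hy
    by_contra hneg
    push_neg at hneg
    set k := derivWithin z (Ici x₀) y with hkdef
    have hzy : 0 ≤ z y := hz.nonneg y hy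
    set t := y + (z y + 1) / (-k) with htdef
    have hyt : y ≤ t := by
      rw [htdef]
      have : 0 ≤ (z y + 1) / (-k) := div_nonneg (by linarith) (by linarith)
      linarith
    have h1 := slope_upper (z1 := derivWithin z (Ici x₀)) (convex_Ici y)
      ((isDuLin_contOn hz).mono (Ici_subset_Ici.2 hy))
      (fun s hs => by
        rw [interior_Ici] at hs
        exact isDuLin_hasDeriv hz (lt_of_le_of_lt hy hs))
      (k := k)
      (fun s hs => by
        rw [interior_Ici] at hs
        exact hz1anti hy (mem_Ici.2 (le_trans (mem_Ici.1 hy) hs.le)) hs.le)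
      self_mem_Ici hyt hyt
    have hk0 : -k ≠ 0 := by intro h; rw [neg_eq_zero] at h; exact (ne_of_lt hneg) h
    have h2 : k * (t - y) = -(z y + 1) := by
      rw [htdef]
      field_simp [neg_ne_zero.mp hk0]
      ring
    have h3 : 0 ≤ z t := hz.nonneg t (le_trans hy hyt)
    nlinarith
  -- `z` is monotone
  have hzmono : MonotoneOn z (Ici x₀) := by
    apply monotoneOn_of_deriv_nonneg (convex_Ici x₀) (isDuLin_contOn hz)
    · intro s hs
      rw [interior_Ici] at hs
      exact (isDuLin_hasDeriv hz hs).differentiableAt.differentiableWithinAt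
    · intro s hs
      rw [interior_Ici] at hs
      rw [(isDuLin_hasDeriv hz hs).deriv]
      exact hz1nonneg s (mem_Ici.2 hs.le)
  -- Step D : limits at infinity
  have himne : (z '' Ici x₀).Nonempty := ⟨z x₀, x₀, self_mem_Ici, rfl⟩
  have himbdd : BddAbove (z '' Ici x₀) := ⟨a, by rintro v ⟨t, ht, rfl⟩; exact hzle t ht⟩
  set l := sSup (z '' Ici x₀) with hldef
  have hztend : Tendsto z atTop (𝓝 l) := by
    have hmono2 : Monotone fun t => z (max t x₀) := fun u v huv =>
      hzmono (mem_Ici.2 (le_max_right _ _)) (mem_Ici.2 (le_max_right _ _)) (max_le_max huv le_rfl)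
    have hrange : range (fun t => z (max t x₀)) = z '' Ici x₀ := by
      ext v
      constructor
      · rintro ⟨u, rfl⟩; exact ⟨max u x₀, mem_Ici.2 (le_max_right _ _), rfl⟩
      · rintro ⟨u, hu, rfl⟩; exact ⟨u, by simp [max_eq_left (mem_Ici.1 hu)]⟩
    have h1 := tendsto_atTop_ciSup hmono2 (hrange ▸ himbdd)
    have h2 : ⨆ t, z (max t x₀) = l := by rw [hldef, ← hrange]; rfl
    rw [h2] at h1
    refine h1.congr' ?_
    filter_upwards [eventually_ge_atTop x₀] with u hu
    rw [max_eq_left hu]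
  have hz1imbdd : BddBelow (derivWithin z (Ici x₀) '' Ici x₀) :=
    ⟨0, by rintro v ⟨u, hu, rfl⟩; exact hz1nonneg u hu⟩
  have hz1tend : Tendsto (derivWithin z (Ici x₀)) atTop (𝓝 0) := by
    set m := sInf (derivWithin z (Ici x₀) '' Ici x₀) with hmdef
    have hz1ne : (derivWithin z (Ici x₀) '' Ici x₀).Nonempty :=
      ⟨derivWithin z (Ici x₀) x₀, x₀, self_mem_Ici, rfl⟩
    have hm0 : 0 ≤ m :=
      le_csInf hz1ne (by rintro v ⟨u, hu, rfl⟩; exact hz1nonneg u hu)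
    have hmle : m ≤ 0 := by
      by_contra hmpos
      push_neg at hmpos
      set t := x₀ + (a + 1) / m with htdef
      have hxt : x₀ ≤ t := by
        rw [htdef]
        have : 0 ≤ (a + 1) / m := div_nonneg (by linarith) hmpos.le
        linarith
      have h1 := slope_lower (z1 := derivWithin z (Ici x₀)) (convex_Ici x₀)
        (isDuLin_contOn hz)
        (fun s hs => by rw [interior_Ici] at hs; exact isDuLin_hasDeriv hz hs)
        (k := m)
        (fun s hs => by
          rw [interior_Ici] at hs
          exact csInf_le hz1imbdd ⟨s, mem_Ici.2 hs.le, rfl⟩)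
        self_mem_Ici hxt hxt
      have h2 : m * (t - x₀) = a + 1 := by
        rw [htdef]
        field_simp
        ring
      have h3 := hzle t hxt
      rw [hz.zero_at] at h1
      nlinarith
    have hmeq : m = 0 := le_antisymm hmle hm0
    have hanti2 : Antitone fun t => derivWithin z (Ici x₀) (max t x₀) := fun u v huv =>
      hz1anti (mem_Ici.2 (le_max_right _ _)) (mem_Ici.2 (le_max_right _ _)) (max_le_max huv le_rfl)
    have hrange : range (fun t => derivWithin z (Ici x₀) (max t x₀))
        = derivWithin z (Ici x₀) '' Ici x₀ := by
      ext v
      constructor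
      · rintro ⟨u, rfl⟩; exact ⟨max u x₀, mem_Ici.2 (le_max_right _ _), rfl⟩
      · rintro ⟨u, hu, rfl⟩; exact ⟨u, by simp [max_eq_left (mem_Ici.1 hu)]⟩
    have h1 := tendsto_atTop_ciInf hanti2 (hrange ▸ hz1imbdd)
    have h2 : ⨅ t, derivWithin z (Ici x₀) (max t x₀) = m := by rw [hmdef, ← hrange]; rfl
    rw [h2, hmeq] at h1
    refine h1.congr' ?_
    filter_upwards [eventually_ge_atTop x₀] with u hu
    simp [max_eq_left hu]
  -- Step E : the limit of `z` is `a`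
  have hla : l ≤ a := csSup_le himne (by rintro v ⟨u, hu, rfl⟩; exact hzle u hu)
  have hlpos : 0 < l := by
    obtain ⟨xs, hxs, hne⟩ := hz.nonzero
    have h0 := hz.nonneg xs hxs
    have h1 : z xs ≤ l := le_csSup himbdd ⟨xs, hxs, rfl⟩
    have h2 : 0 < z xs := lt_of_le_of_ne h0 (Ne.symm hne)
    linarith
  have hleq : l = a := by
    by_contra hne
    have hllt : l < a := lt_of_le_of_ne hla hne
    obtain ⟨β, hβpos, hβle⟩ := hβ l hlpos.le hllt
    obtain ⟨y₁, hy₁⟩ := Filter.eventually_atTop.1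
      (hztend.eventually (eventually_gt_nhds (show l / 2 < l by linarith)))
    set y₀ := max y₁ x₀ with hy₀def
    have hy₀x : x₀ ≤ y₀ := le_max_right _ _
    set k := -(l / 2 * β) with hkdef
    set t := y₀ + (derivWithin z (Ici x₀) y₀ + 1) / (l / 2 * β) with htdef
    have hyt : y₀ ≤ t := by
      rw [htdef]
      have h0 : 0 ≤ derivWithin z (Ici x₀) y₀ := hz1nonneg y₀ hy₀x
      have : 0 ≤ (derivWithin z (Ici x₀) y₀ + 1) / (l / 2 * β) :=
        div_nonneg (by linarith) (by positivity)
      linarith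
    have h1 := slope_upper (z := derivWithin z (Ici x₀))
      (z1 := derivWithin (derivWithin z (Ici x₀)) (Ici x₀)) (convex_Ici y₀)
      ((isDuLin_cont1 hz).mono (Ici_subset_Ici.2 hy₀x))
      (fun s hs => by
        rw [interior_Ici] at hs
        exact isDuLin_hasDeriv1 hz (lt_of_le_of_lt hy₀x hs))
      (k := k)
      (fun s hs => by
        rw [interior_Ici] at hs
        have hsx : x₀ < s := lt_of_le_of_lt hy₀x hs
        rw [hode s hsx, hkdef]
        have h2 : l / 2 < z s := hy₁ s (le_trans (le_max_left _ _) hs.le)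
        have h3 : z s ≤ l := le_csSup himbdd ⟨s, hsx.le, rfl⟩
        have h4 : β ≤ g (z s) s := hβle _ _ (hz.nonneg s hsx.le) h3
        have h5 : l / 2 * β ≤ z s * g (z s) s :=
          mul_le_mul h2.le h4 hβpos.le (by linarith)
        linarith)
      self_mem_Ici hyt hyt
    have h2 : k * (t - y₀) = -(derivWithin z (Ici x₀) y₀ + 1) := by
      rw [htdef, hkdef]
      have hne0 : l / 2 * β ≠ 0 := by positivity
      field_simp
      ring
    have h3 := hz1nonneg t (le_trans hy₀x hyt)
    nlinarith
  -- Step F : energy estimates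
  have hztend' : Tendsto z atTop (𝓝 a) := hleq ▸ hztend
  have main : ∀ (h : ℝ → ℝ), Continuous h →
      ∀ sign : Bool,
      ((sign = true → ∀ u y, 0 ≤ u → u ≤ a → h u ≤ g u y) ∧
       (sign = false → ∀ u y, 0 ≤ u → u ≤ a → g u y ≤ h u)) →
      ((sign = true → 2 * ∫ s in (0:ℝ)..a, s * h s ≤ derivWithin z (Ici x₀) x₀ ^ 2) ∧
       (sign = false → derivWithin z (Ici x₀) x₀ ^ 2 ≤ 2 * ∫ s in (0:ℝ)..a, s * h s)) := by
    intro h hc sign hb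
    set H : ℝ → ℝ := fun v => ∫ s in (0:ℝ)..v, s * h s with hHdef
    have hint : Continuous fun s => s * h s := continuous_id.mul hc
    have hHd : ∀ v : ℝ, HasDerivAt H (v * h v) v := fun v =>
      intervalIntegral.integral_hasDerivAt_right (hint.intervalIntegrable _ _)
        (hint.stronglyMeasurableAtFilter _ _) hint.continuousAt
    have hHc : Continuous H := continuous_iff_continuousAt.2 fun v => (hHd v).continuousAt
    set E : ℝ → ℝ := fun y => derivWithin z (Ici x₀) y ^ 2 + 2 * H (z y) with hEdef
    have hEd : ∀ s, x₀ < s → HasDerivAt E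
        (((2:ℕ):ℝ) * derivWithin z (Ici x₀) s ^ (2-1)
            * derivWithin (derivWithin z (Ici x₀)) (Ici x₀) s
          + 2 * (z s * h (z s) * derivWithin z (Ici x₀) s)) s := by
      intro s hs
      exact ((isDuLin_hasDeriv1 hz hs).pow 2).add
        (((hHd (z s)).comp s (isDuLin_hasDeriv hz hs)).const_mul 2)
    have hEc : ContinuousOn E (Ici x₀) :=
      ((isDuLin_cont1 hz).pow 2).add
        (continuousOn_const.mul (hHc.comp_continuousOn (isDuLin_contOn hz)))
    have hEx₀ : E x₀ = derivWithin z (Ici x₀) x₀ ^ 2 := by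
      simp [hEdef, hHdef, hz.zero_at]
    have hlim : Tendsto E atTop (𝓝 ((0:ℝ) ^ 2 + 2 * H a)) :=
      (hz1tend.pow 2).add ((hHc.continuousAt.tendsto.comp hztend').const_mul 2)
    constructor
    · intro hsign
      have hble := hb.1 hsign
      have hEanti : AntitoneOn E (Ici x₀) := by
        apply antitoneOn_of_deriv_nonpos (convex_Ici x₀) hEc
        · intro s hs
          rw [interior_Ici] at hs
          exact (hEd s hs).differentiableAt.differentiableWithinAt
        · intro s hs
          rw [interior_Ici] at hs
          rw [(hEd s hs).deriv, hode s hs]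
          have h01 := hz1nonneg s (mem_Ici.2 hs.le)
          have h02 := hz.nonneg s (mem_Ici.2 hs.le)
          have h03 : h (z s) ≤ g (z s) s := hble _ s h02 (hzle s (mem_Ici.2 hs.le))
          have key : 0 ≤ derivWithin z (Ici x₀) s * (z s * (g (z s) s - h (z s))) :=
            mul_nonneg h01 (mul_nonneg h02 (by linarith))
          push_cast
          nlinarith [key]
      have hfin : (0:ℝ) ^ 2 + 2 * H a ≤ derivWithin z (Ici x₀) x₀ ^ 2 := by
        apply le_of_tendsto hlim
        filter_upwards [eventually_ge_atTop x₀] with u hu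
        rw [← hEx₀]
        exact hEanti self_mem_Ici hu hu
      simpa [hHdef] using hfin
    · intro hsign
      have hbge := hb.2 hsign
      have hEmono : MonotoneOn E (Ici x₀) := by
        apply monotoneOn_of_deriv_nonneg (convex_Ici x₀) hEc
        · intro s hs
          rw [interior_Ici] at hs
          exact (hEd s hs).differentiableAt.differentiableWithinAt
        · intro s hs
          rw [interior_Ici] at hs
          rw [(hEd s hs).deriv, hode s hs]
          have h01 := hz1nonneg s (mem_Ici.2 hs.le)
          have h02 := hz.nonneg s (mem_Ici.2 hs.le)
          have h03 : g (z s) s ≤ h (z s) := hbge _ s h02 (hzle s (mem_Ici.2 hs.le))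
          have key : 0 ≤ derivWithin z (Ici x₀) s * (z s * (h (z s) - g (z s) s)) :=
            mul_nonneg h01 (mul_nonneg h02 (by linarith))
          push_cast
          nlinarith [key]
      have hfin : derivWithin z (Ici x₀) x₀ ^ 2 ≤ (0:ℝ) ^ 2 + 2 * H a := by
        apply ge_of_tendsto hlim
        filter_upwards [eventually_ge_atTop x₀] with u hu
        rw [← hEx₀]
        exact hEmono self_mem_Ici hu hu
      simpa [hHdef] using hfin
  refine ⟨hz1nonneg x₀ self_mem_Ici, ?_, ?_⟩
  · intro h hc hble
    exact (main h hc true ⟨fun _ => hble, by simp⟩).1 rfl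
  · intro h hc hbge
    exact (main h hc false ⟨by simp, fun _ => hbge⟩).2 rfl

lemma periodic_exists_rep {L : ℝ} (hL : 0 < L) (f : ℝ → ℝ) (hp : ∀ x, f (x + L) = f x)
    (y : ℝ) : ∃ x ∈ Icc (0:ℝ) L, f y = f x := by
  refine ⟨y - ⌊y / L⌋ * L,
    ⟨Int.sub_floor_div_mul_nonneg y hL, (Int.sub_floor_div_mul_lt y hL).le⟩, ?_⟩
  exact (Function.Periodic.sub_int_mul_eq hp ⌊y / L⌋).symm

lemma continuous_of_isLeast {L : ℝ} (hL : 0 < L) {F : ℝ → ℝ → ℝ}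
    (hF : Continuous (uncurry F)) {l : ℝ → ℝ}
    (hl : ∀ u, IsLeast {v : ℝ | ∃ x ∈ Icc (0:ℝ) L, F u x = v} (l u)) :
    Continuous l := by
  rw [continuous_iff_continuousAt]
  intro u₀
  rw [Metric.continuousAt_iff]
  intro ε hε
  have hK : IsCompact (Icc (u₀ - 1) (u₀ + 1) ×ˢ Icc (0:ℝ) L) :=
    isCompact_Icc.prod isCompact_Icc
  have hUC := hK.uniformContinuousOn_of_continuous hF.continuousOn
  rw [Metric.uniformContinuousOn_iff] at hUC
  obtain ⟨δ, hδ, hUC⟩ := hUC ε hε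
  have claim : ∀ v w : ℝ, v ∈ Icc (u₀-1) (u₀+1) → w ∈ Icc (u₀-1) (u₀+1) →
      dist v w < δ → l v < l w + ε := by
    intro v w hv hw hvw
    obtain ⟨xw, hxw, hxwe⟩ := (hl w).1
    have h1 : l v ≤ F v xw := (hl v).2 ⟨xw, hxw, rfl⟩
    have h2 : dist ((v, xw) : ℝ × ℝ) (w, xw) < δ := by
      rw [Prod.dist_eq]
      simpa [dist_self, max_eq_left dist_nonneg] using hvw
    have h3 : |F v xw - F w xw| < ε := hUC (v, xw) ⟨hv, hxw⟩ (w, xw) ⟨hw, hxw⟩ h2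
    have h4 := (abs_lt.1 h3).2
    rw [hxwe] at h4
    linarith
  have hu₀mem : u₀ ∈ Icc (u₀-1) (u₀+1) := by constructor <;> linarith
  refine ⟨min δ 1, by positivity, fun u hu => ?_⟩
  have hd1 : dist u u₀ < 1 := lt_of_lt_of_le hu (min_le_right _ _)
  have hdδ : dist u u₀ < δ := lt_of_lt_of_le hu (min_le_left _ _)
  have humem : u ∈ Icc (u₀-1) (u₀+1) := by
    rw [Real.dist_eq] at hd1
    have h5 := abs_lt.1 hd1
    constructor <;> linarith [h5.1, h5.2]
  have c1 := claim u u₀ humem hu₀mem hdδ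
  have c2 := claim u₀ u hu₀mem humem (by rwa [dist_comm])
  rw [Real.dist_eq, abs_lt]
  constructor <;> linarith

lemma continuous_of_isGreatest {L : ℝ} (hL : 0 < L) {F : ℝ → ℝ → ℝ}
    (hF : Continuous (uncurry F)) {g : ℝ → ℝ}
    (hg : ∀ u, IsGreatest {v : ℝ | ∃ x ∈ Icc (0:ℝ) L, F u x = v} (g u)) :
    Continuous g := by
  have h1 : ∀ u, IsLeast {v : ℝ | ∃ x ∈ Icc (0:ℝ) L, -(F u x) = v} (-(g u)) := by
    intro u
    obtain ⟨⟨x, hx, hxe⟩, hub⟩ := hg u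
    refine ⟨⟨x, hx, by rw [hxe]⟩, ?_⟩
    rintro v ⟨t, ht, rfl⟩
    have h2 : F u t ≤ g u := hub ⟨t, ht, rfl⟩
    linarith
  have h2 : Continuous fun u => -(g u) :=
    continuous_of_isLeast hL (F := fun u x => -(F u x)) hF.neg h1
  simpa only [Pi.neg_def, neg_neg] using h2.neg

lemma isLeast_min_image {L : ℝ} (hL : 0 < L) {F : ℝ → ℝ → ℝ}
    (hF : Continuous (uncurry F)) (u : ℝ) :
    IsLeast {v : ℝ | ∃ x ∈ Icc (0:ℝ) L, F u x = v} (sInf (F u '' Icc (0:ℝ) L)) := by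
  have hc : ContinuousOn (F u) (Icc 0 L) := (hF.comp (Continuous.prodMk_right u)).continuousOn
  obtain ⟨x, hx, hmin⟩ := isCompact_Icc.exists_isMinOn (nonempty_Icc.2 hL.le) hc
  have hleast : IsLeast (F u '' Icc (0:ℝ) L) (F u x) :=
    ⟨⟨x, hx, rfl⟩, by rintro v ⟨t, ht, rfl⟩; exact isMinOn_iff.1 hmin t ht⟩
  have hset : {v : ℝ | ∃ x ∈ Icc (0:ℝ) L, F u x = v} = F u '' Icc (0:ℝ) L := rfl
  rw [hset, hleast.csInf_eq]
  exact hleast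

end DuLinAux
/-- the explicit `d`-independent bounds `r̲ ≤ α²/d ≤ r̄` on the range of
parameters for which the sets `X⁺_{(d,α)}`, `X⁻_{(d,α)}` are nonempty. Here
`Θ₁ x = Θ(x, (u,y) ↦ f₁(u, 2x - y))`, `θ̲ = Θ(0, f̲₂)`, `θ̄ = Θ(0, f̄₂)`,
`r̲ = (θ̲ / sup Θ₁)²` and `r̄ = (θ̄ / inf Θ₁)²`. -/
theorem parameter_range_bounds
    (L : ℝ) (hL : 0 < L)
    (f₁ f₂ : ℝ → ℝ → ℝ) (a₁ a₂ : ℝ)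
    (hf₁ : Admissible L f₁ a₁) (hf₂ : Admissible L f₂ a₂)
    (fl fu : ℝ → ℝ)
    (hfl : ∀ u : ℝ, IsLeast {v : ℝ | ∃ x ∈ Icc (0 : ℝ) L, f₂ u x = v} (fl u))
    (hfu : ∀ u : ℝ, IsGreatest {v : ℝ | ∃ x ∈ Icc (0 : ℝ) L, f₂ u x = v} (fu u))
    (zl zu : ℝ → ℝ)
    (hzl : IsDuLin 0 (fun u _ => fl u) zl)
    (hzu : IsDuLin 0 (fun u _ => fu u) zu)
    (Θ₁ : ℝ → ℝ) (zfam : ℝ → ℝ → ℝ)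
    (hfam : ∀ x : ℝ, IsDuLin x (fun u y => f₁ u (2 * x - y)) (zfam x))
    (hΘ₁ : ∀ x : ℝ, Θ₁ x = derivWithin (zfam x) (Ici x) x) :
    BddAbove (Θ₁ '' Icc (0 : ℝ) L) ∧
    0 < sInf (Θ₁ '' Icc (0 : ℝ) L) ∧
    sInf (Θ₁ '' Icc (0 : ℝ) L) ≤ sSup (Θ₁ '' Icc (0 : ℝ) L) ∧
    (∀ d α : ℝ, 0 < d → 0 < α →
      ((∃ x ∈ Ico (0 : ℝ) L, ∃ w : ℝ → ℝ,
          IsDuLin x (fun u y => (1 / d) * f₂ (u / d) y) w ∧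
          derivWithin w (Ici x) x ≤ α * Θ₁ x) →
        (derivWithin zl (Ici (0 : ℝ)) 0 / sSup (Θ₁ '' Icc (0 : ℝ) L)) ^ 2
          ≤ α ^ 2 / d) ∧
      ((∃ x ∈ Ico (0 : ℝ) L, ∃ w : ℝ → ℝ,
          IsDuLin x (fun u y => (1 / d) * f₂ (u / d) y) w ∧
          α * Θ₁ x ≤ derivWithin w (Ici x) x) →
        α ^ 2 / d
          ≤ (derivWithin zu (Ici (0 : ℝ)) 0 / sInf (Θ₁ '' Icc (0 : ℝ) L)) ^ 2)) := by
  have hf₂c : Continuous (uncurry f₂) := hf₂.smooth.continuous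
  have hf₁c : Continuous (uncurry f₁) := hf₁.smooth.continuous
  have ha₂ := hf₂.zero_pos
  have ha₁ := hf₁.zero_pos
  -- basic facts about `fl` and `fu`
  have hfl_le : ∀ u y, fl u ≤ f₂ u y := by
    intro u y
    obtain ⟨x, hx, hxe⟩ := periodic_exists_rep hL (fun t => f₂ u t) (hf₂.periodic u) y
    rw [hxe]
    exact (hfl u).2 ⟨x, hx, rfl⟩
  have hfu_ge : ∀ u y, f₂ u y ≤ fu u := by
    intro u y
    obtain ⟨x, hx, hxe⟩ := periodic_exists_rep hL (fun t => f₂ u t) (hf₂.periodic u) y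
    rw [hxe]
    exact (hfu u).2 ⟨x, hx, rfl⟩
  have hfl_anti : ∀ u v, u < v → fl v < fl u := by
    intro u v huv
    obtain ⟨x, hx, hxe⟩ := (hfl u).1
    calc fl v ≤ f₂ v x := (hfl v).2 ⟨x, hx, rfl⟩
    _ < f₂ u x := hf₂.strict_anti x huv
    _ = fl u := hxe
  have hfu_anti : ∀ u v, u < v → fu v < fu u := by
    intro u v huv
    obtain ⟨x, hx, hxe⟩ := (hfu v).1
    calc fu v = f₂ v x := hxe.symm
    _ < f₂ u x := hf₂.strict_anti x huv
    _ ≤ fu u := (hfu u).2 ⟨x, hx, rfl⟩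
  have hfl_zero : fl a₂ = 0 := by
    obtain ⟨x, hx, hxe⟩ := (hfl a₂).1
    rw [← hxe, hf₂.zero_root]
  have hfu_zero : fu a₂ = 0 := by
    obtain ⟨x, hx, hxe⟩ := (hfu a₂).1
    rw [← hxe, hf₂.zero_root]
  have hflc : Continuous fl := continuous_of_isLeast hL hf₂c hfl
  have hfuc : Continuous fu := continuous_of_isGreatest hL hf₂c hfu
  have hfl_nonneg : ∀ u, u ≤ a₂ → 0 ≤ fl u := by
    intro u hu
    rcases eq_or_lt_of_le hu with rfl | h
    · rw [hfl_zero]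
    · have := hfl_anti u a₂ h; linarith [hfl_zero ▸ this]
  have hfu_nonneg : ∀ u, u ≤ a₂ → 0 ≤ fu u := by
    intro u hu
    rcases eq_or_lt_of_le hu with rfl | h
    · rw [hfu_zero]
    · have := hfu_anti u a₂ h; linarith [hfu_zero ▸ this]
  have hfl_pos : ∀ u, u < a₂ → 0 < fl u := by
    intro u hu
    have := hfl_anti u a₂ hu
    rwa [hfl_zero] at this
  have hfu_pos : ∀ u, u < a₂ → 0 < fu u := by
    intro u hu
    have := hfu_anti u a₂ hu
    rwa [hfu_zero] at this
  have hfl_neg : ∀ u, a₂ < u → fl u < 0 := by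
    intro u hu
    have := hfl_anti a₂ u hu
    rwa [hfl_zero] at this
  have hfu_neg : ∀ u, a₂ < u → fu u < 0 := by
    intro u hu
    have := hfu_anti a₂ u hu
    rwa [hfu_zero] at this
  have hfl_mono : ∀ u v, u ≤ v → fl v ≤ fl u := by
    intro u v huv
    rcases eq_or_lt_of_le huv with rfl | h
    · exact le_rfl
    · exact (hfl_anti u v h).le
  have hfu_mono : ∀ u v, u ≤ v → fu v ≤ fu u := by
    intro u v huv
    rcases eq_or_lt_of_le huv with rfl | h
    · exact le_rfl
    · exact (hfu_anti u v h).le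
  -- the minimum function of `f₁` and a uniform upper bound
  set m₁ : ℝ → ℝ := fun u => sInf (f₁ u '' Icc (0:ℝ) L) with hm₁def
  have hm₁ : ∀ u, IsLeast {v : ℝ | ∃ x ∈ Icc (0:ℝ) L, f₁ u x = v} (m₁ u) :=
    fun u => isLeast_min_image hL hf₁c u
  have hm₁_le : ∀ u y, m₁ u ≤ f₁ u y := by
    intro u y
    obtain ⟨x, hx, hxe⟩ := periodic_exists_rep hL (fun t => f₁ u t) (hf₁.periodic u) y
    rw [hxe]
    exact (hm₁ u).2 ⟨x, hx, rfl⟩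
  have hm₁c : Continuous m₁ := continuous_of_isLeast hL hf₁c hm₁
  have hm₁_pos : ∀ u, u < a₁ → 0 < m₁ u := by
    intro u hu
    obtain ⟨x, hx, hxe⟩ := (hm₁ u).1
    rw [← hxe]
    have h := hf₁.strict_anti x hu
    simpa [hf₁.zero_root] using h
  obtain ⟨p, hp, hpmax⟩ := (isCompact_Icc.prod isCompact_Icc).exists_isMaxOn
    (⟨((0:ℝ), (0:ℝ)), ⟨⟨le_rfl, ha₁.le⟩, ⟨le_rfl, hL.le⟩⟩⟩ :
      (Icc (0:ℝ) a₁ ×ˢ Icc (0:ℝ) L).Nonempty)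
    hf₁c.continuousOn
  set C := uncurry f₁ p with hCdef
  have hC : ∀ u y, 0 ≤ u → u ≤ a₁ → f₁ u y ≤ C := by
    intro u y h0 h1'
    obtain ⟨x, hx, hxe⟩ := periodic_exists_rep hL (fun t => f₁ u t) (hf₁.periodic u) y
    rw [hxe]
    exact isMaxOn_iff.1 hpmax (u, x) ⟨⟨h0, h1'⟩, hx⟩
  set c₁ := 2 * ∫ s in (0:ℝ)..a₁, s * m₁ s with hc₁def
  set c₂ := 2 * ∫ s in (0:ℝ)..a₁, s * C with hc₂def
  have hc₁pos : 0 < c₁ := by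
    rw [hc₁def]
    have hpos : 0 < ∫ s in (0:ℝ)..a₁, s * m₁ s := by
      apply intervalIntegral.intervalIntegral_pos_of_pos_on
      · exact (continuous_id.mul hm₁c).intervalIntegrable _ _
      · intro s hs
        exact mul_pos hs.1 (hm₁_pos s hs.2)
      · exact ha₁
    linarith
  have hfam_facts : ∀ x : ℝ, 0 ≤ Θ₁ x ∧ c₁ ≤ Θ₁ x ^ 2 ∧ Θ₁ x ^ 2 ≤ c₂ := by
    intro x
    obtain ⟨h0, hlow, hup⟩ := dulin_key (hfam x) ha₁
      (fun u y _ h1' => by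
        simpa [hf₁.zero_root] using (hf₁.strict_anti (2*x - y)).antitone h1')
      (fun u y hu => by
        simpa [hf₁.zero_root] using hf₁.strict_anti (2*x - y) hu)
      (fun b _ hba => ⟨m₁ b, hm₁_pos b hba,
        fun u y _ hub => le_trans (hm₁_le b (2*x - y)) ((hf₁.strict_anti (2*x - y)).antitone hub)⟩)
    rw [hΘ₁ x]
    refine ⟨h0, ?_, ?_⟩
    · rw [hc₁def]
      exact hlow m₁ hm₁c (fun u y _ _ => hm₁_le u (2*x - y))
    · rw [hc₂def]
      exact hup (fun _ => C) continuous_const (fun u y h0' h1' => hC u (2*x - y) h0' h1')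
  have hne : (Θ₁ '' Icc (0:ℝ) L).Nonempty := ⟨Θ₁ 0, 0, ⟨le_rfl, hL.le⟩, rfl⟩
  have hub : ∀ v ∈ Θ₁ '' Icc (0:ℝ) L, v ≤ max 1 c₂ := by
    rintro v ⟨x, hx, rfl⟩
    obtain ⟨h0, hlow, hup⟩ := hfam_facts x
    rcases le_or_gt (Θ₁ x) 1 with h | h
    · exact le_trans h (le_max_left _ _)
    · have h2 : Θ₁ x ≤ Θ₁ x ^ 2 := by nlinarith
      exact le_trans h2 (le_trans hup (le_max_right _ _))
  have hlb : ∀ v ∈ Θ₁ '' Icc (0:ℝ) L, min 1 c₁ ≤ v := by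
    rintro v ⟨x, hx, rfl⟩
    obtain ⟨h0, hlow, hup⟩ := hfam_facts x
    rcases le_or_gt 1 (Θ₁ x) with h | h
    · exact le_trans (min_le_left _ _) h
    · have h2 : Θ₁ x ^ 2 ≤ Θ₁ x := by nlinarith
      exact le_trans (min_le_right _ _) (le_trans hlow h2)
  have hBA : BddAbove (Θ₁ '' Icc (0:ℝ) L) := ⟨max 1 c₂, hub⟩
  have hBB : BddBelow (Θ₁ '' Icc (0:ℝ) L) := ⟨min 1 c₁, hlb⟩
  have hInfpos : 0 < sInf (Θ₁ '' Icc (0:ℝ) L) :=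
    lt_of_lt_of_le (lt_min one_pos hc₁pos) (le_csInf hne hlb)
  have hIS : sInf (Θ₁ '' Icc (0:ℝ) L) ≤ sSup (Θ₁ '' Icc (0:ℝ) L) :=
    csInf_le_csSup hne hBB hBA
  have hSuppos : 0 < sSup (Θ₁ '' Icc (0:ℝ) L) := lt_of_lt_of_le hInfpos hIS
  refine ⟨hBA, hInfpos, hIS, ?_⟩
  intro d α hd hα
  -- the Du–Lin solutions for `fl` and `fu`
  obtain ⟨hθl0, _, hθlup⟩ := dulin_key hzl ha₂
    (fun u y _ h1' => hfl_nonneg u h1')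
    (fun u y hu => hfl_neg u hu)
    (fun b hb0 hba => ⟨fl b, hfl_pos b hba, fun u y _ hub => hfl_mono u b hub⟩)
  have hθl2 : derivWithin zl (Ici (0:ℝ)) 0 ^ 2 ≤ 2 * ∫ s in (0:ℝ)..a₂, s * fl s :=
    hθlup fl hflc (fun u y _ _ => le_rfl)
  obtain ⟨hθu0, hθulow, _⟩ := dulin_key hzu ha₂
    (fun u y _ h1' => hfu_nonneg u h1')
    (fun u y hu => hfu_neg u hu)
    (fun b hb0 hba => ⟨fu b, hfu_pos b hba, fun u y _ hub => hfu_mono u b hub⟩)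
  have hθu2 : 2 * ∫ s in (0:ℝ)..a₂, s * fu s ≤ derivWithin zu (Ici (0:ℝ)) 0 ^ 2 :=
    hθulow fu hfuc (fun u y _ _ => le_rfl)
  have hda₂ : 0 < d * a₂ := mul_pos hd ha₂
  -- change of variables
  have hchange : ∀ q : ℝ → ℝ, Continuous q →
      (∫ s in (0:ℝ)..(d*a₂), s * (1/d * q (s/d))) = d * ∫ s in (0:ℝ)..a₂, s * q s := by
    intro q hq
    have h1 : EqOn (fun s => s * (1/d * q (s/d))) (fun s => (fun v => v * q v) (s/d))
        (uIcc (0:ℝ) (d*a₂)) := by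
      intro s _
      show s * (1/d * q (s/d)) = s/d * q (s/d)
      ring
    rw [intervalIntegral.integral_congr h1,
      intervalIntegral.integral_comp_div (fun v => v * q v) (ne_of_gt hd)]
    have h2 : d * a₂ / d = a₂ := by field_simp
    rw [zero_div, h2, smul_eq_mul]
  -- master facts for a Du–Lin solution of the rescaled problem
  have hwfacts : ∀ x : ℝ, ∀ w : ℝ → ℝ,
      IsDuLin x (fun u y => (1 / d) * f₂ (u / d) y) w →
      0 ≤ derivWithin w (Ici x) x ∧
      d * (2 * ∫ s in (0:ℝ)..a₂, s * fl s) ≤ derivWithin w (Ici x) x ^ 2 ∧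
      derivWithin w (Ici x) x ^ 2 ≤ d * (2 * ∫ s in (0:ℝ)..a₂, s * fu s) := by
    intro x w hw
    obtain ⟨h0, hlow, hup⟩ := dulin_key hw hda₂
      (fun u y h0 h1' => by
        have hud : u / d ≤ a₂ := by rw [div_le_iff₀ hd, mul_comm]; exact h1'
        exact mul_nonneg (by positivity)
          (le_trans (hfl_nonneg _ hud) (hfl_le (u/d) y)))
      (fun u y hu => by
        have hud : a₂ < u / d := by rw [lt_div_iff₀ hd, mul_comm]; exact hu
        exact mul_neg_of_pos_of_neg (by positivity)
          (lt_of_le_of_lt (hfu_ge (u/d) y) (hfu_neg _ hud)))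
      (fun b hb0 hba => by
        have hbd : b / d < a₂ := by rw [div_lt_iff₀ hd, mul_comm]; exact hba
        refine ⟨1/d * fl (b/d), mul_pos (by positivity) (hfl_pos _ hbd), fun u y h0 hub => ?_⟩
        have h3 : fl (b/d) ≤ fl (u/d) := hfl_mono _ _ ((div_le_div_iff_of_pos_right hd).2 hub)
        exact mul_le_mul_of_nonneg_left (le_trans h3 (hfl_le (u/d) y)) (by positivity))
    refine ⟨h0, ?_, ?_⟩
    · have h2 := hlow (fun u => 1/d * fl (u/d))
        (continuous_const.mul (hflc.comp (continuous_id.div_const d)))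
        (fun u y _ _ => mul_le_mul_of_nonneg_left (hfl_le (u/d) y) (by positivity))
      rw [hchange fl hflc] at h2
      linarith
    · have h2 := hup (fun u => 1/d * fu (u/d))
        (continuous_const.mul (hfuc.comp (continuous_id.div_const d)))
        (fun u y _ _ => mul_le_mul_of_nonneg_left (hfu_ge (u/d) y) (by positivity))
      rw [hchange fu hfuc] at h2
      linarith
  constructor
  · rintro ⟨x, hx, w, hw, hineq⟩
    obtain ⟨hθw0, hwlow, _⟩ := hwfacts x w hw
    have hΘx_le : Θ₁ x ≤ sSup (Θ₁ '' Icc (0:ℝ) L) := le_csSup hBA ⟨x, ⟨hx.1, hx.2.le⟩, rfl⟩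
    have hΘx0 : 0 ≤ Θ₁ x := (hfam_facts x).1
    have hwle : derivWithin w (Ici x) x ≤ α * sSup (Θ₁ '' Icc (0:ℝ) L) :=
      le_trans hineq (by nlinarith)
    have hsq : derivWithin w (Ici x) x ^ 2 ≤ α ^ 2 * sSup (Θ₁ '' Icc (0:ℝ) L) ^ 2 := by
      nlinarith
    rw [div_pow, div_le_div_iff₀ (by positivity) hd]
    nlinarith [mul_le_mul_of_nonneg_right hθl2 hd.le]
  · rintro ⟨x, hx, w, hw, hineq⟩
    obtain ⟨hθw0, _, hwup⟩ := hwfacts x w hw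
    have hΘx_ge : sInf (Θ₁ '' Icc (0:ℝ) L) ≤ Θ₁ x := csInf_le hBB ⟨x, ⟨hx.1, hx.2.le⟩, rfl⟩
    have h5 : α * sInf (Θ₁ '' Icc (0:ℝ) L) ≤ α * Θ₁ x := by nlinarith
    have hwge : α * sInf (Θ₁ '' Icc (0:ℝ) L) ≤ derivWithin w (Ici x) x :=
      le_trans h5 hineq
    have hsq : (α * sInf (Θ₁ '' Icc (0:ℝ) L)) ^ 2 ≤ derivWithin w (Ici x) x ^ 2 :=
      pow_le_pow_left₀ (by positivity) hwge 2
    have e1 : (α * sInf (Θ₁ '' Icc (0:ℝ) L)) ^ 2 = α ^ 2 * sInf (Θ₁ '' Icc (0:ℝ) L) ^ 2 :=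
      mul_pow _ _ 2
    have e2 : derivWithin w (Ici x) x ^ 2 ≤ d * derivWithin zu (Ici (0:ℝ)) 0 ^ 2 :=
      le_trans hwup (mul_le_mul_of_nonneg_left hθu2 hd.le)
    rw [div_pow, div_le_div_iff₀ hd (by positivity)]
    linarith [e1 ▸ hsq]
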